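/- Let 0 < α < 1 and x, y ∈ [1/2, 1]. Define β = (1-α)(1-x) + α·y and h(x,y) = (1-x)y/β + x(1-y)/(1-β). Then the partial derivative of h with respect to x equals α·(((1-y)β)² - (y(1-β))²)/(β²(1-β)²), and this is ≤ 0, i.e., h is nonincreasing in x on [1/2, 1]. -/

import Mathlib

/-- The partial derivative of h with respect to x equals
α(((1-y)β)² - (y(1-β))²)/(β²(1-β)²), and it is ≤ 0 on [1/2,1]. -/
theorem stmt4 (α y : ℝ) (hα0 : 0 < α) (hα1 : α < 1)
    (hy : 1/2 ≤ y) (hy1 : y ≤ 1)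
    (x : ℝ) (hx : 1/2 ≤ x) (hx1 : x ≤ 1) :
    HasDerivAt (fun t : ℝ =>
        (1 - t) * y / ((1 - α) * (1 - t) + α * y)
          + t * (1 - y) / (1 - ((1 - α) * (1 - t) + α * y)))
      (α * (((1 - y) * ((1 - α) * (1 - x) + α * y)) ^ 2
            - (y * (1 - ((1 - α) * (1 - x) + α * y))) ^ 2)
        / (((1 - α) * (1 - x) + α * y) ^ 2
            * (1 - ((1 - α) * (1 - x) + α * y)) ^ 2)) x
    ∧ α * (((1 - y) * ((1 - α) * (1 - x) + α * y)) ^ 2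
            - (y * (1 - ((1 - α) * (1 - x) + α * y))) ^ 2)
        / (((1 - α) * (1 - x) + α * y) ^ 2
            * (1 - ((1 - α) * (1 - x) + α * y)) ^ 2) ≤ 0 := by
  have hβ0 : (0:ℝ) < (1 - α) * (1 - x) + α * y := by nlinarith
  have hβ1 : (1 - α) * (1 - x) + α * y < 1 := by nlinarith
  constructor
  · have h1 : HasDerivAt (fun t : ℝ => (1 - t) * y) (-y) x := by
      simpa using ((hasDerivAt_id x).const_sub 1).mul_const y
    have h2 : HasDerivAt (fun t : ℝ => (1 - α) * (1 - t) + α * y) (-(1 - α)) x := by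
      simpa using (((hasDerivAt_id x).const_sub 1).const_mul (1 - α)).add_const (α * y)
    have h3 : HasDerivAt (fun t : ℝ => t * (1 - y)) (1 - y) x := by
      simpa using (hasDerivAt_id x).mul_const (1 - y)
    have h4 : HasDerivAt (fun t : ℝ => 1 - ((1 - α) * (1 - t) + α * y)) (1 - α) x := by
      simpa using h2.const_sub 1
    have h5 : (1 : ℝ) - ((1 - α) * (1 - x) + α * y) ≠ 0 := by linarith
    have hd := (h1.div h2 hβ0.ne').add (h3.div h4 h5)
    convert hd using 1
    · rfl
    · rfl
    · rfl
    field_simp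
    ring
  · apply div_nonpos_of_nonpos_of_nonneg
    · have hby : (1 - α) * (1 - x) + α * y ≤ y := by nlinarith
      have ha : 0 ≤ (1 - y) * ((1 - α) * (1 - x) + α * y) := by nlinarith
      have hb : (1 - y) * ((1 - α) * (1 - x) + α * y)
          ≤ y * (1 - ((1 - α) * (1 - x) + α * y)) := by nlinarith
      have hsq := pow_le_pow_left₀ ha hb 2
      exact mul_nonpos_iff.mpr (Or.inl ⟨hα0.le, sub_nonpos.mpr hsq⟩)
    · positivity
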